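/- arXiv:1701.03990 — 4 statements merged into one kernel-verified Lean document; each statement's English description precedes it below -/
import Mathlib

section
/- Let F be a finite field, let n ≥ 2 and d ≥ 2 be integers, and let k₁, k₂ ≥ 0 be integers. Then card R_{k₁+k₂}(n,d;F) ≥ card R''_{k₁}(n,d−1;F) · card R''_{k₂}(n−1,d;F). -/
/-- `R_k(n,d;K)`: the set of `z ∈ K^{𝒥(n,d)}` (where `𝒥(n,d) = {j ∈ ℕⁿ : j₁+⋯+jₙ ≤ d}`)
such that `z_j = Σ_{i=1}^k y_i x_i^j` for some `x₁,…,x_k ∈ Kⁿ`, `y₁,…,y_k ∈ K`. -/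
def Rset (K : Type*) [Field K] (n d k : ℕ) :
    Set ({j : Fin n → ℕ // ∑ i, j i ≤ d} → K) :=
  {z | ∃ (x : Fin k → Fin n → K) (y : Fin k → K),
    ∀ j, z j = ∑ i, y i * ∏ t, x i t ^ j.1 t}

/-- `R''_k(n,d;K)`: as `R_k(n,d;K)` but requiring every coordinate of every `x_i` to be
nonzero. -/
def RsetNZ (K : Type*) [Field K] (n d k : ℕ) :
    Set ({j : Fin n → ℕ // ∑ i, j i ≤ d} → K) :=
  {z | ∃ (x : Fin k → Fin n → K) (y : Fin k → K),
    (∀ i t, x i t ≠ 0) ∧ ∀ j, z j = ∑ i, y i * ∏ t, x i t ^ j.1 t}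

instance Jfin (n d : ℕ) : Finite {j : Fin n → ℕ // ∑ i, j i ≤ d} := by
  have hb : ∀ j : {j : Fin n → ℕ // ∑ i, j i ≤ d}, ∀ i, j.1 i ≤ d := fun j i =>
    le_trans (Finset.single_le_sum (f := j.1) (fun _ _ => Nat.zero_le _) (Finset.mem_univ i)) j.2
  apply Finite.of_injective
    (fun j => (fun i => (⟨j.1 i, Nat.lt_succ_of_le (hb j i)⟩ : Fin (d+1))))
  intro a b h
  apply Subtype.ext; funext i
  exact congrArg Fin.val (congrFun h i)

section

variable {K : Type*} [Field K] {n d k : ℕ}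

noncomputable def wX (z : RsetNZ K n d k) : Fin k → Fin n → K := z.2.choose
noncomputable def wY (z : RsetNZ K n d k) : Fin k → K := z.2.choose_spec.choose

lemma wX_ne (z : RsetNZ K n d k) : ∀ i t, wX z i t ≠ 0 :=
  z.2.choose_spec.choose_spec.1

lemma w_spec (z : RsetNZ K n d k) :
    ∀ j, z.1 j = ∑ i, wY z i * ∏ t, wX z i t ^ j.1 t :=
  z.2.choose_spec.choose_spec.2

end

section

variable (F : Type*) [Field F] (m d k₁ k₂ : ℕ)

noncomputable def phiFun (z₁ : RsetNZ F (m+1) (d-1) k₁) (z₂ : RsetNZ F m d k₂) :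
    {j : Fin (m+1) → ℕ // ∑ i, j i ≤ d} → F :=
  fun j => (∑ i, (wY z₁ i / wX z₁ i (Fin.last m)) * ∏ t, wX z₁ i t ^ j.1 t)
    + ∑ i, wY z₂ i * ∏ t, (Fin.snoc (wX z₂ i) 0 : Fin (m+1) → F) t ^ j.1 t

lemma phiFun_mem (z₁ : RsetNZ F (m+1) (d-1) k₁) (z₂ : RsetNZ F m d k₂) :
    phiFun F m d k₁ k₂ z₁ z₂ ∈ Rset F (m+1) d (k₁+k₂) := by
  refine ⟨Fin.addCases (fun i => wX z₁ i) (fun i => (Fin.snoc (wX z₂ i) 0 : Fin (m+1) → F)),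
    Fin.addCases (fun i => wY z₁ i / wX z₁ i (Fin.last m)) (fun i => wY z₂ i), fun j => ?_⟩
  rw [Fin.sum_univ_add]
  simp [phiFun]

/-- exponent vector `j + e_last` -/
def Jp (j : Fin (m+1) → ℕ) : Fin (m+1) → ℕ :=
  fun t => j t + if t = Fin.last m then 1 else 0

lemma Jp_sum (j : Fin (m+1) → ℕ) : ∑ t, Jp m j t = (∑ t, j t) + 1 := by
  simp [Jp, Finset.sum_add_distrib]

lemma R1 (hd : 1 ≤ d) (z₁ : RsetNZ F (m+1) (d-1) k₁) (z₂ : RsetNZ F m d k₂)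
    (j : Fin (m+1) → ℕ) (hj : ∑ i, j i ≤ d - 1) :
    phiFun F m d k₁ k₂ z₁ z₂ ⟨Jp m j, by rw [Jp_sum]; omega⟩ = z₁.1 ⟨j, hj⟩ := by
  rw [w_spec z₁ ⟨j, hj⟩]
  unfold phiFun
  have h2 : ∀ i : Fin k₂,
      wY z₂ i * ∏ t, (Fin.snoc (wX z₂ i) 0 : Fin (m+1) → F) t ^ Jp m j t = 0 := by
    intro i
    rw [Fin.prod_univ_castSucc]
    simp [Jp, Fin.snoc_last, pow_succ]
  rw [Finset.sum_congr rfl (fun i _ => h2 i), Finset.sum_const_zero, add_zero]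
  refine Finset.sum_congr rfl fun i _ => ?_
  have hprod : (∏ t, wX z₁ i t ^ Jp m j t)
      = (∏ t, wX z₁ i t ^ j t) * wX z₁ i (Fin.last m) := by
    rw [Fin.prod_univ_castSucc, Fin.prod_univ_castSucc (f := fun t => wX z₁ i t ^ j t)]
    have : ∀ s : Fin m, Jp m j s.castSucc = j s.castSucc := by
      intro s; simp [Jp, (Fin.castSucc_lt_last s).ne]
    rw [Finset.prod_congr rfl fun s _ => by rw [this s]]
    simp [Jp, pow_succ]; ring
  rw [hprod]
  have hx := wX_ne z₁ i (Fin.last m)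
  field_simp

lemma snoc_sum (j' : Fin m → ℕ) : ∑ t, (Fin.snoc j' 0 : Fin (m+1) → ℕ) t = ∑ s, j' s := by
  rw [Fin.sum_univ_castSucc]; simp

lemma R2 (z₁ : RsetNZ F (m+1) (d-1) k₁) (z₂ : RsetNZ F m d k₂)
    (j' : Fin m → ℕ) (hj : ∑ s, j' s ≤ d) :
    phiFun F m d k₁ k₂ z₁ z₂ ⟨Fin.snoc j' 0, by rw [snoc_sum]; exact hj⟩
      = (∑ i, (wY z₁ i / wX z₁ i (Fin.last m))
          * ∏ t, wX z₁ i t ^ (Fin.snoc j' 0 : Fin (m+1) → ℕ) t) + z₂.1 ⟨j', hj⟩ := by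
  rw [w_spec z₂ ⟨j', hj⟩]
  unfold phiFun
  congr 1
  refine Finset.sum_congr rfl fun i _ => ?_
  congr 1
  rw [Fin.prod_univ_castSucc]
  simp

theorem key (hd : 1 ≤ d) [Fintype F] :
    Nat.card (RsetNZ F (m+1) (d-1) k₁) * Nat.card (RsetNZ F m d k₂)
      ≤ Nat.card (Rset F (m+1) d (k₁+k₂)) := by
  rw [← Nat.card_prod]
  apply Nat.card_le_card_of_injective
    (fun p : RsetNZ F (m+1) (d-1) k₁ × RsetNZ F m d k₂ =>
      (⟨phiFun F m d k₁ k₂ p.1 p.2, phiFun_mem F m d k₁ k₂ p.1 p.2⟩ : Rset F (m+1) d (k₁+k₂)))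
  rintro ⟨a₁, a₂⟩ ⟨b₁, b₂⟩ h
  have h' : phiFun F m d k₁ k₂ a₁ a₂ = phiFun F m d k₁ k₂ b₁ b₂ := congrArg Subtype.val h
  have e1 : a₁ = b₁ := by
    apply Subtype.ext; funext j
    obtain ⟨jv, hjv⟩ := j
    rw [← R1 F m d k₁ k₂ hd a₁ a₂ jv hjv, ← R1 F m d k₁ k₂ hd b₁ b₂ jv hjv, h']
  subst e1
  have e2 : a₂ = b₂ := by
    apply Subtype.ext; funext j
    obtain ⟨jv, hjv⟩ := j
    have ha := R2 F m d k₁ k₂ a₁ a₂ jv hjv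
    have hb := R2 F m d k₁ k₂ a₁ b₂ jv hjv
    rw [h'] at ha
    rw [hb] at ha
    exact (add_left_cancel ha.symm)
  rw [e2]

end

/-- Let `F` be a finite field, `n ≥ 2`, `d ≥ 2`, and `k₁, k₂ ≥ 0`. Then
`card R_{k₁+k₂}(n,d;F) ≥ card R''_{k₁}(n,d-1;F) · card R''_{k₂}(n-1,d;F)`. -/
theorem stmt_1 (F : Type*) [Field F] [Fintype F] (n d : ℕ) (hn : 2 ≤ n) (hd : 2 ≤ d)
    (k₁ k₂ : ℕ) :
    Nat.card (RsetNZ F n (d - 1) k₁) * Nat.card (RsetNZ F (n - 1) d k₂)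
      ≤ Nat.card (Rset F n d (k₁ + k₂)) := by
  obtain ⟨m, rfl⟩ : ∃ m, n = m + 1 := ⟨n - 1, by omega⟩
  exact key F m d k₁ k₂ (by omega)
end

section
/- Let n be a positive integer, r > 0, and let S ⊆ ℝⁿ be a measurable set of positive Lebesgue measure contained in the closed ball of radius r centered at 0. Suppose U ⊆ ℝⁿ has the property that for all c, c' ∈ U with c ≠ c', ∫_S e^{2πi (c−c')·z} dz = 0. Then for all c, c' ∈ U with c ≠ c' one has ‖c − c'‖ ≥ 1/(4r); in particular U is a discrete (and hence countable) subset of ℝⁿ. -/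
open MeasureTheory Real
open scoped RealInnerProductSpace

/-- Let `n` be a positive integer, `r > 0`, and `S ⊆ ℝⁿ` a measurable set of positive
Lebesgue measure contained in the closed ball of radius `r` centered at `0`.  Suppose
`U ⊆ ℝⁿ` is such that for all `c ≠ c'` in `U`, `∫_S e^{2πi (c-c')·z} dz = 0`.  Then any
two distinct points of `U` are at distance at least `1/(4r)`; in particular `U` is
countable. -/
theorem stmt_9 (n : ℕ) (hn : 0 < n) (r : ℝ) (hr : 0 < r)
    (S : Set (EuclideanSpace ℝ (Fin n))) (hmeas : MeasurableSet S)
    (hpos : 0 < volume S) (hball : S ⊆ Metric.closedBall 0 r)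
    (U : Set (EuclideanSpace ℝ (Fin n)))
    (hU : ∀ c ∈ U, ∀ c' ∈ U, c ≠ c' →
      (∫ z in S, Complex.exp (2 * π * Complex.I * ((⟪c - c', z⟫ : ℝ) : ℂ))) = 0) :
    (∀ c ∈ U, ∀ c' ∈ U, c ≠ c' → 1 / (4 * r) ≤ ‖c - c'‖) ∧ U.Countable := by
  have hSfin : volume S ≠ ⊤ :=
    ((measure_mono hball).trans_lt (measure_closedBall_lt_top)).ne
  have key : ∀ c ∈ U, ∀ c' ∈ U, c ≠ c' → 1 / (4 * r) ≤ ‖c - c'‖ := by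
    intro c hc c' hc' hne
    by_contra hlt
    push_neg at hlt
    set d := c - c' with hd
    have hint0 := hU c hc c' hc' hne
    -- the function
    set f : EuclideanSpace ℝ (Fin n) → ℂ :=
      fun z => Complex.exp (2 * π * Complex.I * ((⟪d, z⟫ : ℝ) : ℂ)) with hf
    have hcont : Continuous f := by
      have h1 : Continuous fun z : EuclideanSpace ℝ (Fin n) => (⟪d, z⟫ : ℝ) :=
        continuous_const.inner continuous_id
      exact Complex.continuous_exp.comp
        (continuous_const.mul (Complex.continuous_ofReal.comp h1))
    have hintg : IntegrableOn f S volume := by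
      apply Measure.integrableOn_of_bounded hSfin hcont.aestronglyMeasurable (M := 1)
      filter_upwards with z
      have : (2 * π * Complex.I * ((⟪d, z⟫ : ℝ) : ℂ)) =
          ((2 * π * ⟪d, z⟫ : ℝ) : ℂ) * Complex.I := by push_cast; ring
      rw [hf]
      simp only [this, Complex.norm_exp_ofReal_mul_I]
      exact le_refl 1
    -- real part of f
    have hre : ∀ z, (f z).re = Real.cos (2 * π * ⟪d, z⟫) := by
      intro z
      have : (2 * π * Complex.I * ((⟪d, z⟫ : ℝ) : ℂ)) =
          ((2 * π * ⟪d, z⟫ : ℝ) : ℂ) * Complex.I := by push_cast; ring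
      rw [hf]
      simp only [this, Complex.exp_ofReal_mul_I_re]
    -- bound on the angle
    have hdr : 0 ≤ 2 * π * (‖d‖ * r) := by positivity
    have hang : 2 * π * (‖d‖ * r) < π / 2 := by
      have h1 : ‖d‖ * r < 1 / 4 := by
        have h2 := (lt_div_iff₀ (by positivity : (0:ℝ) < 4 * r)).mp hlt
        nlinarith
      calc 2 * π * (‖d‖ * r) < 2 * π * (1 / 4) :=
            mul_lt_mul_of_pos_left h1 (by positivity)
        _ = π / 2 := by ring
    have hcospos : 0 < Real.cos (2 * π * (‖d‖ * r)) :=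
      Real.cos_pos_of_mem_Ioo ⟨by linarith [Real.pi_pos], hang⟩
    have hbound : ∀ z ∈ S, Real.cos (2 * π * (‖d‖ * r)) ≤ (f z).re := by
      intro z hz
      rw [hre]
      have hz' : ‖z‖ ≤ r := by
        have := hball hz
        simpa [Metric.mem_closedBall, dist_zero_right] using this
      have habs : |⟪d, z⟫| ≤ ‖d‖ * r := by
        calc |⟪d, z⟫| ≤ ‖d‖ * ‖z‖ := abs_real_inner_le_norm d z
          _ ≤ ‖d‖ * r := by
              exact mul_le_mul_of_nonneg_left hz' (norm_nonneg d)
      have h1 : Real.cos (2 * π * ⟪d, z⟫) = Real.cos (|2 * π * ⟪d, z⟫|) := by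
        rcases abs_cases (2 * π * ⟪d, z⟫) with ⟨h, _⟩ | ⟨h, _⟩
        · rw [h]
        · rw [h, Real.cos_neg]
      rw [h1]
      apply Real.cos_le_cos_of_nonneg_of_le_pi (abs_nonneg _)
      · linarith [Real.pi_pos]
      · calc |2 * π * ⟪d, z⟫| = 2 * π * |⟪d, z⟫| := by
              rw [abs_mul]; congr 1; rw [abs_of_nonneg (by positivity)]
          _ ≤ 2 * π * (‖d‖ * r) := by
              exact mul_le_mul_of_nonneg_left habs (by positivity)
    -- positivity of the real part of the integral
    have hrepos : 0 < (∫ z in S, f z).re := by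
      have := setIntegral_ge_of_const_le (μ := volume) (f := fun z => (f z).re)
        hmeas hSfin hbound hintg.re
      have hI : ∫ z in S, (f z).re = (∫ z in S, f z).re := by
        simpa using integral_re hintg
      have hvol : 0 < (volume S).toReal := ENNReal.toReal_pos hpos.ne' hSfin
      rw [smul_eq_mul, measureReal_def] at this
      nlinarith [this, hI]
    rw [hf] at hrepos
    rw [hint0] at hrepos
    simp at hrepos
  refine ⟨key, ?_⟩
  -- balls of radius 1/(8r) around points of U are pairwise disjoint
  have hdisj : U.PairwiseDisjoint (fun c => Metric.ball c (1 / (8 * r))) := by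
    intro c hc c' hc' hne
    apply Metric.ball_disjoint_ball
    have := key c hc c' hc' hne
    have h8 : 1 / (8 * r) + 1 / (8 * r) = 1 / (4 * r) := by field_simp; ring
    rw [h8]
    calc (1 : ℝ) / (4 * r) ≤ ‖c - c'‖ := this
      _ = dist c c' := by rw [dist_eq_norm]
  exact hdisj.countable_of_isOpen (fun c _ => Metric.isOpen_ball)
    (fun c _ => Metric.nonempty_ball.2 (by positivity))
end

section
/- Let H be an inner product space over ℂ, let C be a finite index set, let (φ_c)_{c ∈ C} be a family of unit vectors in H, and let (e_c)_{c ∈ C} be an orthonormal family in H. Then Σ_{c ∈ C} |⟨e_c, φ_c⟩|² ≤ dim span{φ_c : c ∈ C}. In particular, if c is chosen uniformly at random from C, the probability of correctly identifying c by the orthogonal measurement with outcome vectors (e_c), namely (1/|C|) Σ_{c ∈ C} |⟨e_c, φ_c⟩|², is at most dim span{φ_c : c ∈ C} / |C|. -/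
/-- Let `H` be a complex inner product space, `C` a finite index set, `(φ_c)` a family of
unit vectors and `(e_c)` an orthonormal family in `H`.  Then
`Σ_c |⟨e_c, φ_c⟩|² ≤ dim span {φ_c}`; in particular the success probability
`(1/|C|) Σ_c |⟨e_c, φ_c⟩|²` of identifying a uniformly random `c` by the orthogonal
measurement with outcome vectors `(e_c)` is at most `dim span {φ_c} / |C|`. -/
theorem stmt_14 {H : Type*} [NormedAddCommGroup H] [InnerProductSpace ℂ H]
    (C : Type*) [Fintype C] (φ e : C → H)
    (hφ : ∀ c, ‖φ c‖ = 1) (he : Orthonormal ℂ e) :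
    (∑ c, ‖(inner ℂ (e c) (φ c) : ℂ)‖ ^ 2
        ≤ (Module.finrank ℂ (Submodule.span ℂ (Set.range φ)) : ℝ)) ∧
      (∑ c, ‖(inner ℂ (e c) (φ c) : ℂ)‖ ^ 2) / (Fintype.card C : ℝ)
        ≤ (Module.finrank ℂ (Submodule.span ℂ (Set.range φ)) : ℝ) / (Fintype.card C : ℝ) := by
  set K := Submodule.span ℂ (Set.range φ) with hK
  haveI : FiniteDimensional ℂ K := FiniteDimensional.span_of_finite ℂ (Set.finite_range φ)
  set n := Module.finrank ℂ K with hn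
  obtain b := stdOrthonormalBasis ℂ K
  -- Parseval in K
  have parseval : ∀ x : K, ‖x‖ ^ 2 = ∑ j, ‖(inner ℂ (b j) x : ℂ)‖ ^ 2 := by
    intro x
    rw [← b.repr.norm_map x, EuclideanSpace.norm_eq, Real.sq_sqrt
      (Finset.sum_nonneg fun _ _ => sq_nonneg _)]
    simp [b.repr_apply_apply]
  have hmem : ∀ c, φ c ∈ K := fun c =>
    Submodule.subset_span (Set.mem_range_self c)
  -- pointwise bound by the norm of the projection
  have step1 : ∀ c, ‖(inner ℂ (e c) (φ c) : ℂ)‖ ^ 2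
      ≤ ‖(K.orthogonalProjectionOnto (e c) : K)‖ ^ 2 := by
    intro c
    have h1 : (inner ℂ (φ c) (e c) : ℂ)
        = inner ℂ ((⟨φ c, hmem c⟩ : K)) (K.orthogonalProjectionOnto (e c)) := by
      rw [Submodule.inner_orthogonalProjectionOnto_eq_of_mem_left]
    have h2 : ‖(inner ℂ (e c) (φ c) : ℂ)‖
        ≤ ‖(K.orthogonalProjectionOnto (e c) : K)‖ := by
      rw [← norm_inner_symm, h1]
      calc ‖(inner ℂ ((⟨φ c, hmem c⟩ : K)) (K.orthogonalProjectionOnto (e c)) : ℂ)‖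
          ≤ ‖(⟨φ c, hmem c⟩ : K)‖ * ‖(K.orthogonalProjectionOnto (e c) : K)‖ :=
            norm_inner_le_norm _ _
        _ = ‖(K.orthogonalProjectionOnto (e c) : K)‖ := by
            rw [show ‖(⟨φ c, hmem c⟩ : K)‖ = ‖φ c‖ from rfl, hφ c, one_mul]
    exact pow_le_pow_left₀ (norm_nonneg _) h2 2
  -- the main bound
  have main : ∑ c, ‖(inner ℂ (e c) (φ c) : ℂ)‖ ^ 2 ≤ (n : ℝ) := by
    calc ∑ c, ‖(inner ℂ (e c) (φ c) : ℂ)‖ ^ 2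
        ≤ ∑ c, ‖(K.orthogonalProjectionOnto (e c) : K)‖ ^ 2 :=
          Finset.sum_le_sum fun c _ => step1 c
      _ = ∑ c, ∑ j, ‖(inner ℂ (b j) (K.orthogonalProjectionOnto (e c)) : ℂ)‖ ^ 2 := by
          simp_rw [parseval]
      _ = ∑ j, ∑ c, ‖(inner ℂ ((b j : H)) (e c) : ℂ)‖ ^ 2 := by
          rw [Finset.sum_comm]
          congr 1; ext j; congr 1; ext c
          rw [Submodule.inner_orthogonalProjectionOnto_eq_of_mem_left]
      _ ≤ ∑ j : Fin n, ‖(b j : H)‖ ^ 2 := by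
          refine Finset.sum_le_sum fun j _ => ?_
          have := he.sum_inner_products_le (s := Finset.univ) ((b j : H))
          calc ∑ c, ‖(inner ℂ ((b j : H)) (e c) : ℂ)‖ ^ 2
              = ∑ c, ‖(inner ℂ (e c) ((b j : H)) : ℂ)‖ ^ 2 := by
                simp_rw [norm_inner_symm]
            _ ≤ ‖(b j : H)‖ ^ 2 := this
      _ = (n : ℝ) := by
          have hb : ∀ j : Fin n, ‖(b j : H)‖ = 1 := fun j => by
            have := b.orthonormal.1 j
            exact this
          simp [hb]
  refine ⟨main, ?_⟩
  rw [div_eq_mul_inv, div_eq_mul_inv]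
  exact mul_le_mul_of_nonneg_right main (by positivity)
end

section
/- Let F be a finite field with q elements, let N ≥ 1 and k ≥ 1 be integers, let X ⊆ F^N be a nonempty set, and for an integer m ≥ 1 define R_m = {Σ_{i=1}^m y_i v_i : y₁,…,y_m ∈ F, v₁,…,v_m ∈ X}. If R_{2k} ≠ F^N, then card R_k ≤ (q^N − 1)/(q − 1). -/
/-- Let `F` be a finite field with `q` elements, `N, k ≥ 1`, `X ⊆ F^N` nonempty, and for
`m ≥ 1` let `R_m = {Σ_{i=1}^m y_i v_i : y_i ∈ F, v_i ∈ X}`.  If `R_{2k} ≠ F^N`, then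
`card R_k ≤ (q^N - 1)/(q - 1)`. -/
theorem stmt_15 (F : Type*) [Field F] [Fintype F] (N k : ℕ) (hN : 1 ≤ N) (hk : 1 ≤ k)
    (X : Set (Fin N → F)) (hX : X.Nonempty)
    (R : ℕ → Set (Fin N → F))
    (hR : ∀ m, R m = {z | ∃ (y : Fin m → F) (v : Fin m → Fin N → F),
      (∀ i, v i ∈ X) ∧ z = ∑ i, y i • v i})
    (h2k : R (2 * k) ≠ Set.univ) :
    Nat.card (R k) ≤ (Fintype.card F ^ N - 1) / (Fintype.card F - 1) := by
  classical
  set q := Fintype.card F with hq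
  have hq2 : 2 ≤ q := Fintype.one_lt_card
  obtain ⟨x0, hx0⟩ := hX
  have h0 : (0 : Fin N → F) ∈ R k := by
    rw [hR]
    exact ⟨0, fun _ => x0, fun _ => hx0, by simp⟩
  have hsmul : ∀ (t : F) c, c ∈ R k → t • c ∈ R k := by
    intro t c hc
    rw [hR] at hc ⊢
    obtain ⟨y, v, hv, rfl⟩ := hc
    exact ⟨t • y, v, hv, by simp [Finset.smul_sum, smul_smul]⟩
  have hadd : ∀ a b, a ∈ R k → b ∈ R k → a + b ∈ R (2 * k) := by
    intro a b ha hb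
    rw [hR] at ha hb ⊢
    obtain ⟨y, v, hv, rfl⟩ := ha
    obtain ⟨y', v', hv', rfl⟩ := hb
    refine ⟨fun i => Fin.append y y' (Fin.cast (two_mul k) i),
            fun i => Fin.append v v' (Fin.cast (two_mul k) i), ?_, ?_⟩
    · intro i
      refine Fin.addCases (motive := fun j => Fin.append v v' j ∈ X) ?_ ?_
        (Fin.cast (two_mul k) i)
      · intro j; simpa [Fin.append_left] using hv j
      · intro j; rw [Fin.append_right]; exact hv' j
    · symm
      refine (Fintype.sum_equiv (finCongr (two_mul k)) _
        (fun j => Fin.append y y' j • Fin.append v v' j) (fun i => rfl)).trans ?_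
      rw [Fin.sum_univ_add]
      congr 1
      · exact Finset.sum_congr rfl fun x _ => by simp only [Fin.append_left]
      · exact Finset.sum_congr rfl fun x _ => by simp only [Fin.append_right]
  -- pick v0 outside R (2k)
  obtain ⟨v0, hv0⟩ : ∃ v0, v0 ∉ R (2 * k) := by
    by_contra h
    push_neg at h
    exact h2k (Set.eq_univ_of_forall h)
  have hv0ne : v0 ≠ 0 := by
    rintro rfl
    exact hv0 (by simpa using hadd 0 0 h0 h0)
  -- injection into the quotient by span {v0}
  set S : Submodule F (Fin N → F) := Submodule.span F {v0} with hS
  have hinj : Function.Injective (fun c : R k => S.mkQ c.val) := by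
    rintro ⟨c1, hc1⟩ ⟨c2, hc2⟩ h
    have hmem : c1 - c2 ∈ S := by
      have h' : S.mkQ c1 = S.mkQ c2 := h
      rwa [Submodule.mkQ_apply, Submodule.mkQ_apply, Submodule.Quotient.eq] at h'
    rw [hS, Submodule.mem_span_singleton] at hmem
    obtain ⟨t, ht⟩ := hmem
    rcases eq_or_ne t 0 with rfl | htne
    · have : c1 - c2 = 0 := by rw [← ht]; simp
      exact Subtype.ext (sub_eq_zero.mp this)
    · exfalso
      apply hv0
      have hv0eq : v0 = t⁻¹ • c1 + (-t⁻¹) • c2 := by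
        have h2 := congrArg (fun z => t⁻¹ • z) ht.symm
        simpa [smul_smul, inv_mul_cancel₀ htne, smul_sub, sub_eq_add_neg] using h2.symm
      rw [hv0eq]
      exact hadd _ _ (hsmul _ _ hc1) (hsmul _ _ hc2)
  -- card of S is q
  have hcardS : Nat.card S = q := by
    have e : F ≃ S := by
      refine Equiv.ofBijective
        (fun t => ⟨t • v0, Submodule.mem_span_singleton.mpr ⟨t, rfl⟩⟩) ⟨?_, ?_⟩
      · intro a b hab
        exact smul_left_injective F hv0ne (congrArg Subtype.val hab)
      · rintro ⟨s, hs⟩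
        obtain ⟨t, ht⟩ := Submodule.mem_span_singleton.mp hs
        exact ⟨t, Subtype.ext ht⟩
    rw [← Nat.card_congr e, Nat.card_eq_fintype_card]
  -- total card
  have hcardM : Nat.card (Fin N → F) = q ^ N := by
    simp [Nat.card_eq_fintype_card, hq]
  have hquot : Nat.card ((Fin N → F) ⧸ S) = q ^ (N - 1) := by
    have hmul := Submodule.card_eq_card_quotient_mul_card S
    rw [hcardM, hcardS] at hmul
    have hqpos : 0 < q := by omega
    have hpow : q ^ N = q * q ^ (N - 1) := by
      conv_lhs => rw [show N = (N - 1) + 1 by omega]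
      ring
    have := hmul.symm.trans hpow
    exact Nat.eq_of_mul_eq_mul_left hqpos this
  have hle1 : Nat.card (R k) ≤ q ^ (N - 1) := by
    rw [← hquot]
    exact Nat.card_le_card_of_injective _ hinj
  refine hle1.trans ?_
  rw [Nat.le_div_iff_mul_le (by omega : 0 < q - 1)]
  have h1 : 1 ≤ q ^ (N - 1) := Nat.one_le_pow _ _ (by omega)
  have heq : q ^ (N - 1) * (q - 1) = q ^ N - q ^ (N - 1) := by
    have hNs : N = (N - 1) + 1 := by omega
    rw [Nat.mul_sub, mul_one, mul_comm, ← pow_succ', ← hNs]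
  rw [heq]
  exact Nat.sub_le_sub_left h1 _
end
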